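/- Let d ≥ 2 and n ≥ 2, and let C = (d + δ_ij) ∈ ℤ^{n×n}. Then the group Aut(C) = {A ∈ GL(n, ℤ) : Aᵀ·C·A = C} consists exactly of the matrices ±P where P ranges over the n×n permutation matrices; in particular Aut(C) ≅ S_n × Z/2. -/

import Mathlib

open Matrix

private lemma permMatrix_apply' {n : ℕ} (σ : Equiv.Perm (Fin n)) (i j : Fin n) :
    σ.permMatrix ℤ i j = if σ i = j then 1 else 0 := by
  simp [Equiv.Perm.permMatrix, PEquiv.toMatrix_apply, Equiv.toPEquiv_apply]

theorem stmt_14 (d n : ℕ) (hd : 2 ≤ d) (hn : 2 ≤ n)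
    (C : Matrix (Fin n) (Fin n) ℤ)
    (hC : ∀ i j, C i j = d + if i = j then 1 else 0) :
    ∀ A : Matrix (Fin n) (Fin n) ℤ,
      (IsUnit A.det ∧ Aᵀ * C * A = C) ↔
      ∃ σ : Equiv.Perm (Fin n), ∃ ε : ℤ, (ε = 1 ∨ ε = -1) ∧
        A = ε • σ.permMatrix ℤ := by
  have hd' : (2:ℤ) ≤ (d:ℤ) := by exact_mod_cast hd
  intro A
  constructor
  · rintro ⟨hu, heq⟩
    set s : Fin n → ℤ := fun j => ∑ i, A i j with hs
    have key : ∀ j k, (d:ℤ) * s j * s k + ∑ i, A i j * A i k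
        = (d:ℤ) + if j = k then 1 else 0 := by
      intro j k
      have h1 := congrFun (congrFun heq j) k
      rw [hC] at h1
      rw [← h1]
      simp only [mul_apply, transpose_apply, hC]
      have inner : ∀ l, (∑ i, A i j * ((d:ℤ) + if i = l then 1 else 0))
          = (d:ℤ) * s j + A l j := by
        intro l
        simp only [mul_add, mul_ite, mul_one, mul_zero, Finset.sum_add_distrib,
          Finset.sum_ite_eq' Finset.univ l (fun i => A i j), Finset.mem_univ, if_true]
        rw [← Finset.sum_mul, hs]
        ring
      have hcongr : (∑ l, (∑ i, A i j * ((d:ℤ) + if i = l then 1 else 0)) * A l k)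
          = ∑ l, ((d:ℤ) * s j * A l k + A l j * A l k) :=
        Finset.sum_congr rfl fun l _ => by rw [inner l]; ring
      rw [hcongr, Finset.sum_add_distrib, ← Finset.mul_sum]
    have diag : ∀ j, (d:ℤ) * (s j * s j) + ∑ i, A i j * A i j = (d:ℤ) + 1 := by
      intro j
      have := key j j
      rw [if_pos rfl] at this
      linarith
    have sumsq_nonneg : ∀ j, (0:ℤ) ≤ ∑ i, A i j * A i j := fun j =>
      Finset.sum_nonneg fun i _ => mul_self_nonneg _
    have sbound : ∀ j, s j = 0 ∨ s j = 1 ∨ s j = -1 := by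
      intro j
      have h1 := diag j
      have h2 := sumsq_nonneg j
      have h3 : s j * s j ≤ 1 := by nlinarith
      rcases le_or_gt (s j) 1 with h4 | h4
      · rcases le_or_gt (-1) (s j) with h5 | h5
        · omega
        · exfalso; nlinarith
      · exfalso; nlinarith
    -- columns with nonzero sum are ± standard basis vectors
    have hcol : ∀ j, s j ≠ 0 → ∃ i, A i j = s j ∧ ∀ i', i' ≠ i → A i' j = 0 := by
      intro j hj
      have hsq : s j * s j = 1 := by rcases sbound j with h | h | h <;> simp [h] at hj ⊢
      have hsum : ∑ i, A i j * A i j = 1 := by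
        have := diag j; rw [hsq, mul_one] at this; linarith
      have hex : ∃ i, A i j ≠ 0 := by
        by_contra h
        push_neg at h
        rw [Finset.sum_eq_zero (fun i _ => by rw [h i, mul_zero])] at hsum
        exact one_ne_zero hsum.symm
      obtain ⟨i, hi⟩ := hex
      have hi1 : 1 ≤ A i j * A i j := by
        rcases lt_trichotomy (A i j) 0 with h | h | h
        · nlinarith
        · exact absurd h hi
        · nlinarith
      have hrest : ∑ i' ∈ Finset.univ.erase i, A i' j * A i' j = 0 := by
        have := Finset.add_sum_erase Finset.univ (fun i' => A i' j * A i' j)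
          (Finset.mem_univ i)
        have hle : ∑ i' ∈ Finset.univ.erase i, A i' j * A i' j ≤ 0 := by linarith
        have hge : (0:ℤ) ≤ ∑ i' ∈ Finset.univ.erase i, A i' j * A i' j :=
          Finset.sum_nonneg fun _ _ => mul_self_nonneg _
        linarith
      have hz : ∀ i', i' ≠ i → A i' j = 0 := by
        intro i' hi'
        have := (Finset.sum_eq_zero_iff_of_nonneg
          (fun x _ => mul_self_nonneg (A x j))).mp hrest i'
          (Finset.mem_erase.mpr ⟨hi', Finset.mem_univ _⟩)
        exact mul_self_eq_zero.mp this
      refine ⟨i, ?_, hz⟩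
      have : s j = A i j := by
        rw [hs]
        exact Finset.sum_eq_single i (fun i' _ h => hz i' h) (fun h => absurd (Finset.mem_univ i) h)
      omega
    -- no column sum is zero
    have hnz : ∀ j, s j ≠ 0 := by
      by_contra h
      push_neg at h
      obtain ⟨j0, hj0⟩ := h
      have hall : ∀ k, s k = 0 := by
        intro k
        by_contra hk
        obtain ⟨i, hi, hz⟩ := hcol k hk
        have hjk : j0 ≠ k := fun h => hk (h ▸ hj0)
        have hkey := key j0 k
        rw [if_neg hjk, hj0] at hkey
        have hsum : ∑ i', A i' j0 * A i' k = A i j0 * A i k := by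
          refine Finset.sum_eq_single i (fun i' _ h => by rw [hz i' h, mul_zero])
            (fun h => absurd (Finset.mem_univ i) h)
        rw [hsum] at hkey
        -- A i j0 * A i k = d with A i k = s k = ±1 and (A i j0)^2 ≤ d+1
        have hb : A i j0 * A i j0 ≤ (d:ℤ) + 1 := by
          have h1 := diag j0
          rw [hj0] at h1
          have h2 : ∑ i', A i' j0 * A i' j0 = (d:ℤ) + 1 := by linarith
          have := Finset.single_le_sum (f := fun i' => A i' j0 * A i' j0)
            (fun x _ => mul_self_nonneg _) (Finset.mem_univ i)
          linarith
        have hsk : s k = 1 ∨ s k = -1 := by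
          rcases sbound k with h | h | h <;> simp [h] at hk ⊢
        rw [hi] at hkey
        simp only [mul_zero, zero_mul, mul_one, zero_add] at hkey
        rcases hsk with h | h <;> rw [h] at hkey <;> nlinarith
      -- then (1,...,1) ᵥ* A = 0, so det A = 0, contradicting IsUnit
      have hdet : A.det = 0 := by
        rw [← Matrix.exists_vecMul_eq_zero_iff]
        refine ⟨fun _ => 1, ?_, ?_⟩
        · intro h
          have := congrFun h ⟨0, by omega⟩
          simp at this
        · funext j
          simpa [vecMul, dotProduct, hs] using hall j
      rw [hdet] at hu
      exact (by norm_num : ¬ IsUnit (0:ℤ)) hu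
    have hsval : ∀ j, s j = 1 ∨ s j = -1 := by
      intro j
      rcases sbound j with h | h | h
      · exact absurd h (hnz j)
      · exact Or.inl h
      · exact Or.inr h
    choose π hπ hπz using fun j => hcol j (hnz j)
    have hinj : Function.Injective π := by
      intro j k hjk
      by_contra hne
      have hkey := key j k
      rw [if_neg hne] at hkey
      have hsum : ∑ i, A i j * A i k = s j * s k := by
        rw [Finset.sum_eq_single (π j) (fun i' _ h => by rw [hπz j i' h, zero_mul])
          (fun h => absurd (Finset.mem_univ _) h)]
        rw [hπ j, hjk, hπ k]
      rw [hsum] at hkey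
      rcases hsval j with h1 | h1 <;> rcases hsval k with h2 | h2 <;>
        rw [h1, h2] at hkey <;> omega
    have hsame : ∀ j k, s j = s k := by
      intro j k
      by_cases hjk : j = k
      · rw [hjk]
      · have hkey := key j k
        rw [if_neg hjk] at hkey
        have hsum : ∑ i, A i j * A i k = 0 := by
          refine Finset.sum_eq_zero fun i _ => ?_
          by_cases h : i = π j
          · have : i ≠ π k := fun h' => hjk (hinj (h ▸ h'))
            rw [hπz k i this, mul_zero]
          · rw [hπz j i h, zero_mul]
        rw [hsum, add_zero] at hkey
        rcases hsval j with h1 | h1 <;> rcases hsval k with h2 | h2 <;>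
          rw [h1, h2] at hkey <;> omega
    have hbij : Function.Bijective π := Finite.injective_iff_bijective.mp hinj
    set e := Equiv.ofBijective π hbij with he
    refine ⟨e.symm, s ⟨0, by omega⟩, hsval _, ?_⟩
    ext i j
    rw [Matrix.smul_apply, permMatrix_apply', smul_eq_mul]
    by_cases h : e.symm i = j
    · rw [if_pos h, mul_one]
      have hij : i = π j := by
        have := congrArg e h
        rw [Equiv.apply_symm_apply] at this
        rw [this, he, Equiv.ofBijective_apply]
      rw [hij, hπ j, hsame ⟨0, by omega⟩ j]
    · rw [if_neg h, mul_zero]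
      apply hπz j
      intro hij
      exact h (by rw [hij, he]; exact Equiv.symm_apply_apply _ _)
  · rintro ⟨σ, ε, hε, rfl⟩
    have hε2 : ε * ε = 1 := by rcases hε with h | h <;> rw [h] <;> ring
    constructor
    · rw [Matrix.det_smul, Matrix.det_permutation, Fintype.card_fin]
      exact ((Int.isUnit_iff.mpr (by tauto)).pow n).mul (Equiv.Perm.sign σ).isUnit
    · have htr : (σ.permMatrix ℤ)ᵀ = σ⁻¹.permMatrix ℤ := by
        ext i j
        rw [transpose_apply, permMatrix_apply', permMatrix_apply']
        simp [eq_comm, Equiv.eq_symm_apply, Equiv.Perm.inv_def]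
      rw [Matrix.transpose_smul, htr, Matrix.smul_mul, Matrix.smul_mul,
        Matrix.mul_smul, smul_smul, hε2, one_smul]
      show (σ⁻¹.permMatrix ℤ) * C * (σ.permMatrix ℤ) = C
      rw [Equiv.Perm.permMatrix, Equiv.Perm.permMatrix, PEquiv.toMatrix_toPEquiv_mul,
        PEquiv.mul_toMatrix_toPEquiv]
      ext i j
      simp only [submatrix_apply, id, hC]
      congr 1
      simp [Equiv.Perm.inv_def]
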